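/- Let F be a field and let a₀, a₁, a₂, c, f₀, f₁, f₂ be nonzero elements of F. Let S₀ be the map (a₀,a₁,a₂,c,f₀,f₁,f₂) ↦ (a₀^{-1}, a₀a₁, a₀a₂, c, f₀, f₁(a₀+f₀)/(1+a₀f₀), f₂(1+a₀f₀)/(a₀+f₀)) and let W₀ be the map fixing a₀,a₁,a₂, sending c ↦ c^{-1} and f_i ↦ a_i a_{i+1}(a_{i-1}a_i + a_{i-1}f_i + f_{i-1}f_i)/(f_{i-1}(a_i a_{i+1} + a_i f_{i+1} + f_i f_{i+1})) (indices mod 3). Then, whenever all intermediate denominators are nonzero, S₀ ∘ W₀ = W₀ ∘ S₀ on such tuples. (This expresses the commutativity of the actions of W̃(A₂^{(1)}) and W̃(A₁^{(1)}) in the birational representation of W̃((A₂+A₁)^{(1)}).) -/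

import Mathlib

/-- The birational action of the generator `s₀` of `W̃((A₂+A₁)⁽¹⁾)` on
`(a₀, a₁, a₂, c, f₀, f₁, f₂)`. -/
def weylS0 {F : Type*} [Field F] :
    F × F × F × F × F × F × F → F × F × F × F × F × F × F
  | (a0, a1, a2, c, f0, f1, f2) =>
    (a0⁻¹, a0 * a1, a0 * a2, c, f0,
      f1 * (a0 + f0) / (1 + a0 * f0),
      f2 * (1 + a0 * f0) / (a0 + f0))

/-- The birational action of the generator `w₀` of `W̃((A₂+A₁)⁽¹⁾)` on
`(a₀, a₁, a₂, c, f₀, f₁, f₂)`. -/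
def weylW0 {F : Type*} [Field F] :
    F × F × F × F × F × F × F → F × F × F × F × F × F × F
  | (a0, a1, a2, c, f0, f1, f2) =>
    (a0, a1, a2, c⁻¹,
      a0 * a1 * (a2 * a0 + a2 * f0 + f2 * f0) / (f2 * (a0 * a1 + a0 * f1 + f0 * f1)),
      a1 * a2 * (a0 * a1 + a0 * f1 + f0 * f1) / (f0 * (a1 * a2 + a1 * f2 + f1 * f2)),
      a2 * a0 * (a1 * a2 + a1 * f2 + f1 * f2) / (f1 * (a2 * a0 + a2 * f0 + f2 * f0)))

/-- Nonvanishing of the denominators appearing in `s₀`. -/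
def denS0 {F : Type*} [Field F] (x : F × F × F × F × F × F × F) : Prop :=
  match x with
  | (a0, _, _, _, f0, _, _) => 1 + a0 * f0 ≠ 0 ∧ a0 + f0 ≠ 0

/-- Nonvanishing of the denominators appearing in `w₀`. -/
def denW0 {F : Type*} [Field F] (x : F × F × F × F × F × F × F) : Prop :=
  match x with
  | (a0, a1, a2, _, f0, f1, f2) =>
    f2 * (a0 * a1 + a0 * f1 + f0 * f1) ≠ 0 ∧
    f0 * (a1 * a2 + a1 * f2 + f1 * f2) ≠ 0 ∧
    f1 * (a2 * a0 + a2 * f0 + f2 * f0) ≠ 0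

set_option maxHeartbeats 1000000 in
/-- `s₀ ∘ w₀ = w₀ ∘ s₀`, expressing the commutativity of the
actions of `W̃(A₂⁽¹⁾)` and `W̃(A₁⁽¹⁾)` in the birational representation of
`W̃((A₂+A₁)⁽¹⁾)`. -/
theorem weylS0_weylW0_comm
    (F : Type*) [Field F] (a0 a1 a2 c f0 f1 f2 : F)
    (ha0 : a0 ≠ 0) (ha1 : a1 ≠ 0) (ha2 : a2 ≠ 0) (hc : c ≠ 0)
    (hf0 : f0 ≠ 0) (hf1 : f1 ≠ 0) (hf2 : f2 ≠ 0)
    (h1 : denS0 (a0, a1, a2, c, f0, f1, f2))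
    (h2 : denW0 (a0, a1, a2, c, f0, f1, f2))
    (h3 : denS0 (weylW0 (a0, a1, a2, c, f0, f1, f2)))
    (h4 : denW0 (weylS0 (a0, a1, a2, c, f0, f1, f2))) :
    weylS0 (weylW0 (a0, a1, a2, c, f0, f1, f2)) =
      weylW0 (weylS0 (a0, a1, a2, c, f0, f1, f2)) := by
  obtain ⟨hA, hB⟩ := h1
  obtain ⟨hC, hD, hE⟩ := h2
  simp only [weylS0, weylW0, denS0, denW0] at h3 ⊢
  obtain ⟨h3a, h3b⟩ := h3
  have hCa := right_ne_zero_of_mul hC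
  have hDa := right_ne_zero_of_mul hD
  have hEa := right_ne_zero_of_mul hE
  have e4 : 1 + a0 * (a0 * a1 * (a2 * a0 + a2 * f0 + f2 * f0) / (f2 * (a0 * a1 + a0 * f1 + f0 * f1)))
      = (f2 * (a0 * a1 + a0 * f1 + f0 * f1) + a0 ^ 2 * a1 * (a2 * a0 + a2 * f0 + f2 * f0))
        / (f2 * (a0 * a1 + a0 * f1 + f0 * f1)) := by
    rw [eq_div_iff hC, add_mul, mul_assoc a0, div_mul_cancel₀ _ hC]
    ring
  rw [e4] at h3a
  rw [div_ne_zero_iff] at h3a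
  have hP := h3a.1
  have e1 : a0⁻¹ * (a0 * a1) + a0⁻¹ * (f1 * (a0 + f0) / (1 + a0 * f0)) + f0 * (f1 * (a0 + f0) / (1 + a0 * f0))
      = (a0 * a1 + a0 * f1 + f0 * f1) / a0 := by
    field_simp
    ring
  have e2 : a0 * a2 * a0⁻¹ + a0 * a2 * f0 + f2 * (1 + a0 * f0) / (a0 + f0) * f0
      = (a2 * a0 + a2 * f0 + f2 * f0) * (1 + a0 * f0) / (a0 + f0) := by
    field_simp
  have e3 : a0 * a1 * (a0 * a2) + a0 * a1 * (f2 * (1 + a0 * f0) / (a0 + f0)) +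
        f1 * (a0 + f0) / (1 + a0 * f0) * (f2 * (1 + a0 * f0) / (a0 + f0))
      = (f2 * (a0 * a1 + a0 * f1 + f0 * f1) + a0 ^ 2 * a1 * (a2 * a0 + a2 * f0 + f2 * f0))
        / (a0 + f0) := by
    field_simp
    ring
  have e5 : a0 + a0 * a1 * (a2 * a0 + a2 * f0 + f2 * f0) / (f2 * (a0 * a1 + a0 * f1 + f0 * f1))
      = a0 * ((a0 + f0) * (a1 * a2 + a1 * f2 + f1 * f2)) / (f2 * (a0 * a1 + a0 * f1 + f0 * f1)) := by
    rw [eq_div_iff hC, add_mul, div_mul_cancel₀ _ hC]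
    ring
  refine Prod.ext rfl (Prod.ext rfl (Prod.ext rfl (Prod.ext rfl (Prod.ext ?_ (Prod.ext ?_ ?_)))))
  · rw [e1, e2]
    field_simp
  · rw [e1, e3, e4, e5]
    dsimp only
    generalize f2 * (a0 * a1 + a0 * f1 + f0 * f1) + a0 ^ 2 * a1 * (a2 * a0 + a2 * f0 + f2 * f0) = P at hP ⊢
    generalize a0 * a1 + a0 * f1 + f0 * f1 = X at hCa ⊢
    generalize a1 * a2 + a1 * f2 + f1 * f2 = Y at hDa ⊢
    generalize a2 * a0 + a2 * f0 + f2 * f0 = Z at hEa ⊢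
    field_simp
  · rw [e2, e3, e4, e5]
    dsimp only
    generalize f2 * (a0 * a1 + a0 * f1 + f0 * f1) + a0 ^ 2 * a1 * (a2 * a0 + a2 * f0 + f2 * f0) = P at hP ⊢
    generalize a0 * a1 + a0 * f1 + f0 * f1 = X at hCa ⊢
    generalize a1 * a2 + a1 * f2 + f1 * f2 = Y at hDa ⊢
    generalize a2 * a0 + a2 * f0 + f2 * f0 = Z at hEa ⊢
    field_simp
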